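/- The set D(A) = {f ∈ L²(ℝ) : (x ↦ x f(x)) ∈ L²(ℝ) and lim_{R→∞} ∫_{−R}^{R} f(x) dx exists and equals 0} is a dense linear subspace of L²(ℝ). -/

import Mathlib

open MeasureTheory Filter

open scoped ENNReal

lemma myIntervalIntegrable {f : ℝ → ℂ} (hf : MemLp f 2 (volume : Measure ℝ)) (a b : ℝ) :
    IntervalIntegrable f volume a b := by
  rw [intervalIntegrable_iff]
  haveI : IsFiniteMeasure ((volume : Measure ℝ).restrict (Set.uIoc a b)) :=
    ⟨by rw [Measure.restrict_apply_univ]; simp [Set.uIoc, Real.volume_Ioc]⟩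
  exact (hf.restrict _).integrable one_le_two


/-- The domain `D(A)` of the Friedrichs-model minimal operator: square integrable `f`
with `x f(x)` square integrable and `lim_{R→∞} ∫_{-R}^R f = 0`. -/
def FriedrichsDomA : Set (Lp ℂ 2 (volume : Measure ℝ)) :=
  {f | MemLp (fun x : ℝ => (x : ℂ) * f x) 2 (volume : Measure ℝ) ∧
      Tendsto (fun R : ℝ => ∫ x in (-R)..R, f x) atTop (nhds 0)}

lemma zero_mem : (0 : Lp ℂ 2 (volume : Measure ℝ)) ∈ FriedrichsDomA := by
  have h0 : (↑(0 : Lp ℂ 2 (volume : Measure ℝ)) : ℝ → ℂ) =ᵐ[volume] 0 :=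
    Lp.coeFn_zero ℂ 2 volume
  constructor
  · exact (MemLp.zero : MemLp (0 : ℝ → ℂ) 2 volume).ae_eq
      (by filter_upwards [h0] with x hx; simp [hx])
  · have : ∀ R : ℝ, ∫ x in (-R)..R, (↑(0 : Lp ℂ 2 (volume : Measure ℝ)) : ℝ → ℂ) x = 0 := by
      intro R
      rw [intervalIntegral.integral_congr_ae (h0.mono fun x hx _ => hx)]
      simp
    exact Tendsto.congr (fun R => (this R).symm) tendsto_const_nhds

lemma add_mem' : ∀ f ∈ FriedrichsDomA, ∀ g ∈ FriedrichsDomA, f + g ∈ FriedrichsDomA := by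
  intro f hf g hg
  have hco : (↑(f + g) : ℝ → ℂ) =ᵐ[volume] fun x => f x + g x := Lp.coeFn_add f g
  constructor
  · exact (hf.1.add hg.1).ae_eq (by filter_upwards [hco] with x hx; simp only [Pi.add_apply]; rw [hx]; ring)
  · have heq : ∀ R : ℝ, ∫ x in (-R)..R, (↑(f + g) : ℝ → ℂ) x =
        (∫ x in (-R)..R, f x) + ∫ x in (-R)..R, g x := by
      intro R
      rw [intervalIntegral.integral_congr_ae (hco.mono fun x hx _ => hx),
        intervalIntegral.integral_add (myIntervalIntegrable (Lp.memLp f) _ _)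
          (myIntervalIntegrable (Lp.memLp g) _ _)]
    have := hf.2.add hg.2
    rw [add_zero] at this
    exact Tendsto.congr (fun R => (heq R).symm) this

lemma smul_mem' : ∀ (c : ℂ), ∀ f ∈ FriedrichsDomA, c • f ∈ FriedrichsDomA := by
  intro c f hf
  have hco : (↑(c • f) : ℝ → ℂ) =ᵐ[volume] fun x => c • f x := Lp.coeFn_smul c f
  constructor
  · exact (hf.1.const_smul c).ae_eq
      (by filter_upwards [hco] with x hx; rw [hx]; simp only [Pi.smul_apply, smul_eq_mul]; ring)
  · have heq : ∀ R : ℝ, ∫ x in (-R)..R, (↑(c • f) : ℝ → ℂ) x =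
        c • ∫ x in (-R)..R, f x := by
      intro R
      rw [intervalIntegral.integral_congr_ae (hco.mono fun x hx _ => hx),
        intervalIntegral.integral_smul]
    have := hf.2.const_smul c
    rw [smul_zero] at this
    exact Tendsto.congr (fun R => (heq R).symm) this

lemma approx (f : Lp ℂ 2 (volume : Measure ℝ)) {ε : ℝ} (hε : 0 < ε) :
    ∃ u ∈ FriedrichsDomA, ‖f - u‖ < ε := by
  obtain ⟨g, g_supp, hg_close, g_cont, g_mem⟩ :=
    (Lp.memLp f).exists_hasCompactSupport_eLpNorm_sub_le (by norm_num : (2 : ℝ≥0∞) ≠ ∞)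
      (ε := ENNReal.ofReal (ε / 2)) (ENNReal.ofReal_pos.2 (by linarith)).ne'
  set c : ℂ := ∫ x, g x with hc
  set L : ℝ := max 1 ((2 * ‖c‖ / ε) ^ 2 + 1) with hLdef
  have hL1 : (1 : ℝ) ≤ L := le_max_left _ _
  have hL0 : (0 : ℝ) < L := lt_of_lt_of_le one_pos hL1
  have hLc : (2 * ‖c‖ / ε) ^ 2 < L := lt_of_lt_of_le (lt_add_one _) (le_max_right _ _)
  have hvol : (volume : Measure ℝ) (Set.Ioc 0 L) ≠ ∞ := by
    simp [Real.volume_Ioc]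
  set ind : ℝ → ℂ := Set.indicator (Set.Ioc (0 : ℝ) L) (fun _ => c / L) with hind
  set indLp : Lp ℂ 2 (volume : Measure ℝ) :=
    indicatorConstLp 2 measurableSet_Ioc hvol ((c : ℂ) / L) with hindLp
  set u : Lp ℂ 2 (volume : Measure ℝ) := g_mem.toLp g - indLp with hu
  -- coercion of u
  have hu_coe : (↑u : ℝ → ℂ) =ᵐ[volume] fun x => g x - ind x := by
    filter_upwards [Lp.coeFn_sub (g_mem.toLp g) indLp, g_mem.coeFn_toLp,
      indicatorConstLp_coeFn (p := 2) (hs := measurableSet_Ioc) (hμs := hvol) (c := (c : ℂ) / L)]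
      with x h1 h2 h3
    rw [hu, h1, Pi.sub_apply, h2, h3]
  -- membership of u in the domain
  have humem : u ∈ FriedrichsDomA := by
    constructor
    · -- x * u x is in L²
      have h1 : MemLp (fun x : ℝ => (x : ℂ) * g x) 2 (volume : Measure ℝ) :=
        (Complex.continuous_ofReal.mul g_cont).memLp_of_hasCompactSupport g_supp.mul_left
      have hcs : HasCompactSupport (fun x : ℝ => (x : ℂ) * ind x) := by
        apply HasCompactSupport.intro (isCompact_Icc : IsCompact (Set.Icc (0:ℝ) L))
        intro x hx
        have : x ∉ Set.Ioc (0 : ℝ) L := fun h => hx ⟨le_of_lt h.1, h.2⟩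
        simp [hind, Set.indicator_of_notMem this]
      have h2 : MemLp (fun x : ℝ => (x : ℂ) * ind x) 2 (volume : Measure ℝ) := by
        apply hcs.memLp_of_bound
          (Complex.continuous_ofReal.aestronglyMeasurable.mul
            ((stronglyMeasurable_const.indicator measurableSet_Ioc).aestronglyMeasurable))
          (L * ‖(c : ℂ) / L‖)
        refine ae_of_all _ fun x => ?_
        by_cases hx : x ∈ Set.Ioc (0 : ℝ) L
        · rw [hind, Set.indicator_of_mem hx]
          rw [norm_mul]
          have : ‖(x : ℂ)‖ ≤ L := by
            rw [Complex.norm_real, Real.norm_eq_abs, abs_of_pos hx.1]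
            exact hx.2
          exact mul_le_mul_of_nonneg_right this (norm_nonneg _)
        · rw [hind, Set.indicator_of_notMem hx]
          simp
          positivity
      refine (h1.sub h2).ae_eq ?_
      filter_upwards [hu_coe] with x hx
      simp only [Pi.sub_apply]
      rw [hx]
      ring
    · -- the integrals tend to 0
      have hgi : Integrable g (volume : Measure ℝ) :=
        g_cont.integrable_of_hasCompactSupport g_supp
      have hii : Integrable ind (volume : Measure ℝ) := by
        rw [hind]
        exact (IntegrableOn.integrable_indicator
          (integrableOn_const hvol) measurableSet_Ioc)
      have hic : ∫ x, ind x = c := by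
        rw [hind, MeasureTheory.integral_indicator_const _ measurableSet_Ioc]
        rw [Real.volume_real_Ioc_of_le hL0.le]
        rw [sub_zero, Complex.real_smul]
        have : (L : ℂ) ≠ 0 := by exact_mod_cast hL0.ne'
        field_simp
      have t1 : Tendsto (fun R : ℝ => ∫ x in (-R)..R, g x) atTop (nhds c) :=
        intervalIntegral_tendsto_integral hgi tendsto_neg_atTop_atBot tendsto_id
      have t2 : Tendsto (fun R : ℝ => ∫ x in (-R)..R, ind x) atTop (nhds c) := by
        have := intervalIntegral_tendsto_integral hii tendsto_neg_atTop_atBot tendsto_id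
        rwa [hic] at this
      have heq : ∀ R : ℝ, ∫ x in (-R)..R, (↑u : ℝ → ℂ) x =
          (∫ x in (-R)..R, g x) - ∫ x in (-R)..R, ind x := by
        intro R
        rw [intervalIntegral.integral_congr_ae (hu_coe.mono fun x hx _ => hx),
          intervalIntegral.integral_sub hgi.intervalIntegrable hii.intervalIntegrable]
      have := t1.sub t2
      rw [sub_self] at this
      exact Tendsto.congr (fun R => (heq R).symm) this
  refine ⟨u, humem, ?_⟩
  -- norm estimate
  have hn1 : ‖f - g_mem.toLp g‖ ≤ ε / 2 := by
    rw [Lp.norm_def]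
    have hce : (↑(f - g_mem.toLp g) : ℝ → ℂ) =ᵐ[volume] fun x => f x - g x := by
      filter_upwards [Lp.coeFn_sub f (g_mem.toLp g), g_mem.coeFn_toLp] with x h1 h2
      rw [h1, Pi.sub_apply, h2]
    rw [eLpNorm_congr_ae hce]
    have : eLpNorm (fun x => (f : ℝ → ℂ) x - g x) 2 volume ≤ ENNReal.ofReal (ε / 2) := hg_close
    calc (eLpNorm (fun x => (f : ℝ → ℂ) x - g x) 2 volume).toReal
        ≤ (ENNReal.ofReal (ε / 2)).toReal := ENNReal.toReal_mono ENNReal.ofReal_ne_top this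
      _ = ε / 2 := ENNReal.toReal_ofReal (by linarith)
  have hn2 : ‖indLp‖ < ε / 2 := by
    rw [hindLp, norm_indicatorConstLp (by norm_num) (by norm_num)]
    rw [Real.volume_real_Ioc_of_le hL0.le, sub_zero]
    have h2r : ((2 : ℝ≥0∞).toReal : ℝ) = 2 := by norm_num
    rw [h2r]
    set s : ℝ := Real.sqrt L with hs
    have hs0 : 0 < s := Real.sqrt_pos.2 hL0
    have hsL : s * s = L := Real.mul_self_sqrt hL0.le
    have hLr : L ^ ((1 : ℝ) / 2) = s := by rw [hs, Real.sqrt_eq_rpow]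
    rw [hLr]
    have hcn : ‖(c : ℂ) / (L : ℂ)‖ = ‖c‖ / L := by
      rw [norm_div, Complex.norm_real, Real.norm_eq_abs, abs_of_pos hL0]
    rw [hcn]
    have hss : 2 * ‖c‖ / ε < s := by
      have := Real.sqrt_lt_sqrt (sq_nonneg (2 * ‖c‖ / ε)) hLc
      rwa [Real.sqrt_sq (by positivity)] at this
    have : ‖c‖ / L * s = ‖c‖ / s := by
      rw [← hsL]; field_simp
    rw [this, div_lt_iff₀ hs0]
    rw [div_lt_iff₀ hε] at hss
    linarith
  have hfu : f - u = (f - g_mem.toLp g) + indLp := by rw [hu]; abel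
  rw [hfu]
  calc ‖(f - g_mem.toLp g) + indLp‖ ≤ ‖f - g_mem.toLp g‖ + ‖indLp‖ := norm_add_le _ _
    _ < ε / 2 + ε / 2 := by linarith
    _ = ε := by ring

theorem stmt11 :
    (0 : Lp ℂ 2 (volume : Measure ℝ)) ∈ FriedrichsDomA ∧
    (∀ f ∈ FriedrichsDomA, ∀ g ∈ FriedrichsDomA, f + g ∈ FriedrichsDomA) ∧
    (∀ (c : ℂ), ∀ f ∈ FriedrichsDomA, c • f ∈ FriedrichsDomA) ∧
    Dense FriedrichsDomA := by
  refine ⟨zero_mem, add_mem', smul_mem', ?_⟩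
  rw [Metric.dense_iff]
  intro f r hr
  obtain ⟨u, hu, hufr⟩ := approx f hr
  exact ⟨u, by rwa [Metric.mem_ball, dist_eq_norm, ← norm_neg, neg_sub], hu⟩
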